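/- Let A := ℚ[H]/(H⁴) and consider the I-function of the quintic threefold I(q,z) := z·Σ_{d≥0} q^d · (Π_{k=1}^{5d}(5H + kz)) / (Π_{k=1}^{d}(H + kz)⁵), an element of A[z, z⁻¹][[q]] (each factor (H + kz)^{−1} is expanded as Σ_{i=0}^{3}(−1)^i H^i (kz)^{−i−1}, using H⁴ = 0). Let D_H be the operator D_H := z·q·d/dq + H (multiplication by H plus z times the q-logarithmic derivative). Then (D_H⁴ − 5q·(5D_H + z)(5D_H + 2z)(5D_H + 3z)(5D_H + 4z)) I(q,z) = 0, where the factors denote composition of the operators f ↦ 5D_H(f) + kz·f. -/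

import Mathlib

noncomputable section

open LaurentPolynomial

/-- The ring `A = ℚ[H]/(H⁴)`. -/
abbrev Aring : Type := Polynomial ℚ ⧸ Ideal.span ({Polynomial.X ^ 4} : Set (Polynomial ℚ))

/-- The class `H ∈ A`. -/
def Hcl : Aring := Ideal.Quotient.mk _ Polynomial.X

/-- The ring `A[z, z⁻¹]` of Laurent polynomials in `z` over `A`. -/
abbrev Rring : Type := LaurentPolynomial Aring

/-- The variable `z ∈ A[z, z⁻¹]`. -/
def zL : Rring := T 1

/-- `H` viewed in `A[z, z⁻¹]`. -/
def HL : Rring := LaurentPolynomial.C Hcl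

/-- The expansion of `(H + kz)⁻¹` as `Σ_{i=0}^{3} (−1)^i H^i (kz)^{−i−1}` (using `H⁴ = 0`). -/
def Einv (k : ℕ) : Rring :=
  ∑ i ∈ Finset.range 4,
    (-1 : Rring) ^ i * HL ^ i * algebraMap ℚ Rring (1 / (k : ℚ) ^ (i + 1)) * T (-(i + 1) : ℤ)

/-- The `I`-function of the quintic threefold:
`I(q,z) = z·Σ_{d≥0} q^d (Π_{k=1}^{5d}(5H + kz)) / (Π_{k=1}^{d}(H + kz)⁵)`,
an element of `A[z,z⁻¹][[q]]`. -/
def Iquintic : PowerSeries Rring :=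
  PowerSeries.mk fun d =>
    zL * (∏ k ∈ Finset.Icc 1 (5 * d), (5 * HL + (k : Rring) * zL))
      * ∏ k ∈ Finset.Icc 1 d, (Einv k) ^ 5

/-- The operator `z·q·d/dq` (coefficientwise `q`-logarithmic derivative times `z`). -/
def zqd (f : PowerSeries Rring) : PowerSeries Rring :=
  PowerSeries.mk fun n => (n : Rring) * zL * PowerSeries.coeff n f

/-- The operator `D_H = z·q·d/dq + H`. -/
def DH (f : PowerSeries Rring) : PowerSeries Rring :=
  zqd f + PowerSeries.C HL * f

/-- The operator `f ↦ 5·D_H(f) + kz·f`. -/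
def opk (k : ℕ) (f : PowerSeries Rring) : PowerSeries Rring :=
  5 * DH f + PowerSeries.C ((k : Rring) * zL) * f


lemma HL4 : HL ^ 4 = 0 := by
  unfold HL Hcl
  rw [← map_pow, ← map_pow]
  have : (Ideal.Quotient.mk (Ideal.span ({Polynomial.X ^ 4} : Set (Polynomial ℚ)))) (Polynomial.X ^ 4) = 0 :=
    Ideal.Quotient.eq_zero_iff_mem.mpr (Ideal.subset_span rfl)
  rw [this, map_zero]

lemma einv_mul (k : ℕ) (hk : k ≠ 0) :
    Einv k * (HL + (k : Rring) * zL) = 1 := by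
  have hkq : (k : ℚ) ≠ 0 := Nat.cast_ne_zero.mpr hk
  set b : Rring := algebraMap ℚ Rring (1 / k) * T (-1) with hb
  have hEb : Einv k = b - HL * b ^ 2 + HL ^ 2 * b ^ 3 - HL ^ 3 * b ^ 4 := by
    unfold Einv
    rw [Finset.sum_range_succ, Finset.sum_range_succ, Finset.sum_range_succ,
      Finset.sum_range_succ, Finset.sum_range_zero]
    have h : ∀ i : ℕ, algebraMap ℚ Rring (1 / (k:ℚ) ^ (i+1)) * T (-(i+1) : ℤ) = b ^ (i+1) := by
      intro i
      rw [hb, mul_pow (M := Rring), ← map_pow, div_pow, one_pow, T_pow]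
      congr 1
      push_cast
      ring
    have h0 := h 0; have h1 := h 1; have h2 := h 2; have h3 := h 3
    push_cast at h0 h1 h2 h3 ⊢
    linear_combination (1:Rring) * h0 - HL * h1 + HL ^ 2 * h2 - HL ^ 3 * h3
  have hzb : (k : Rring) * zL * b = 1 := by
    rw [hb, zL]
    have hka : ((k : Rring)) * algebraMap ℚ Rring (1 / k) = 1 := by
      rw [show ((k:Rring)) = algebraMap ℚ Rring (k:ℚ) by push_cast; simp]
      rw [← map_mul]
      field_simp
      exact map_one _
    calc (k : Rring) * T 1 * (algebraMap ℚ Rring (1 / k) * T (-1))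
        = ((k : Rring) * algebraMap ℚ Rring (1 / k)) * (T 1 * T (-1)) := by ring
      _ = 1 := by rw [hka, ← T_add]; norm_num
  rw [hEb]
  linear_combination (1 - HL*b + HL^2*b^2 - HL^3*b^3) * hzb + (- b^4) * HL4

lemma coeff_DH (f : PowerSeries Rring) (n : ℕ) :
    PowerSeries.coeff n (DH f) = ((n : Rring) * zL + HL) * PowerSeries.coeff n f := by
  simp only [DH, map_add, zqd, PowerSeries.coeff_mk, PowerSeries.coeff_C_mul]
  ring

lemma coeff_five_mul (f : PowerSeries Rring) (n : ℕ) :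
    PowerSeries.coeff n (5 * f) = 5 * PowerSeries.coeff n f := by
  rw [show (5 : PowerSeries Rring) = PowerSeries.C 5 from (map_ofNat _ 5).symm,
    PowerSeries.coeff_C_mul]

lemma coeff_opk (k : ℕ) (f : PowerSeries Rring) (n : ℕ) :
    PowerSeries.coeff n (opk k f)
      = (5 * ((n : Rring) * zL + HL) + (k : Rring) * zL) * PowerSeries.coeff n f := by
  simp only [opk, map_add, coeff_five_mul, coeff_DH, PowerSeries.coeff_C_mul]
  ring

/-- The Picard–Fuchs equation for the `I`-function of the quintic:
`(D_H⁴ − 5q·(5D_H + z)(5D_H + 2z)(5D_H + 3z)(5D_H + 4z)) I(q,z) = 0`. -/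
theorem statement2 :
    DH (DH (DH (DH Iquintic)))
      - 5 * PowerSeries.X * opk 1 (opk 2 (opk 3 (opk 4 Iquintic))) = 0 := by
  have hX : (5 : PowerSeries Rring) * PowerSeries.X * opk 1 (opk 2 (opk 3 (opk 4 Iquintic)))
      = PowerSeries.X * (5 * opk 1 (opk 2 (opk 3 (opk 4 Iquintic)))) := by ring
  refine PowerSeries.ext fun n => ?_
  rw [map_sub, map_zero, hX, sub_eq_zero]
  rcases n with _ | n
  · rw [PowerSeries.coeff_zero_X_mul]
    simp only [coeff_DH, Iquintic, PowerSeries.coeff_mk, Nat.cast_zero, zero_mul, zero_add,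
      Nat.mul_zero, show Finset.Icc 1 0 = (∅ : Finset ℕ) from by decide, Finset.prod_empty,
      mul_one]
    linear_combination zL * HL4
  · rw [PowerSeries.coeff_succ_X_mul, coeff_five_mul]
    simp only [coeff_DH, coeff_opk, Iquintic, PowerSeries.coeff_mk]
    rw [show 5 * (n+1) = 5*n+4+1 from by ring, Finset.prod_Icc_succ_top (by omega),
      show 5*n+4 = 5*n+3+1 from rfl, Finset.prod_Icc_succ_top (by omega),
      show 5*n+3 = 5*n+2+1 from rfl, Finset.prod_Icc_succ_top (by omega),
      show 5*n+2 = 5*n+1+1 from rfl, Finset.prod_Icc_succ_top (by omega),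
      show 5*n+1 = 5*n+0+1 from rfl, Finset.prod_Icc_succ_top (by omega),
      Finset.prod_Icc_succ_top (by omega : 1 ≤ n + 1)]
    have hE : Einv (n+1) * (HL + ((n:Rring)+1) * zL) = 1 := by
      have := einv_mul (n+1) (Nat.succ_ne_zero n)
      push_cast at this
      exact this
    have hE5 : (Einv (n+1))^5 * (HL + ((n:Rring)+1) * zL)^5 = 1 := by
      rw [← mul_pow (M := Rring), hE, one_pow]
    push_cast
    linear_combination (5 * zL * (∏ k ∈ Finset.Icc 1 (5*n), (5*HL + (k:Rring)*zL))
      * (∏ k ∈ Finset.Icc 1 n, (Einv k)^5)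
      * (5*HL + (5*(n:Rring)+1)*zL) * (5*HL + (5*(n:Rring)+2)*zL)
      * (5*HL + (5*(n:Rring)+3)*zL) * (5*HL + (5*(n:Rring)+4)*zL)) * hE5


end
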